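/- Let K be a convex body in ℝ^d and ν any measure on ℝ^d. Then D̄(ν;|·|) ≥ D̄_K(ν); that is, for every τ < D̄_K(ν) and every compact set C ⊆ ℝ^d there exists a Borel set V with compact closure such that ν(V) > τ·|C+V|. -/

import Mathlib

open MeasureTheory Set Pointwise Filter ENNReal

/-- The uniform asymptotic upper density of a measure `ν` with respect to `μ`:
`inf` over nonempty compact sets `C` of `sup` over Borel sets `V` with compact
closure of `ν V / μ (C + V)`, where `C + V` is a Minkowski sum. -/
noncomputable def uaud {G : Type*} [AddCommGroup G] [TopologicalSpace G] [MeasurableSpace G]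
    (ν μ : Measure G) : ℝ≥0∞ :=
  ⨅ C ∈ {C : Set G | IsCompact C ∧ C.Nonempty},
    ⨆ V ∈ {V : Set G | MeasurableSet V ∧ IsCompact (closure V)},
      ν V / μ (C + V)

/-- The asymptotic upper density of `ν` with respect to a body `K` in `ℝ^d`:
`limsup_{r → ∞} sup_{x} ν (r K + x) / vol (r K)`. -/
noncomputable def densK {d : ℕ} (K : Set (EuclideanSpace ℝ (Fin d)))
    (ν : Measure (EuclideanSpace ℝ (Fin d))) : ℝ≥0∞ :=
  Filter.limsup
    (fun r : ℝ => ⨆ x : EuclideanSpace ℝ (Fin d), ν ({x} + r • K) / volume (r • K))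
    Filter.atTop

private lemma densK_key {d : ℕ} (K : Set (EuclideanSpace ℝ (Fin d)))
    (hKcomp : IsCompact K) (hKconv : Convex ℝ K) (hKint : (interior K).Nonempty)
    (ν : Measure (EuclideanSpace ℝ (Fin d)))
    (τ : ℝ≥0∞) (hτ : τ < Filter.limsup
      (fun r : ℝ => ⨆ x : EuclideanSpace ℝ (Fin d), ν ({x} + r • K) / volume (r • K))
      Filter.atTop)
    (C : Set (EuclideanSpace ℝ (Fin d))) (hC : IsCompact C) (hCne : C.Nonempty) :
    ∃ V : Set (EuclideanSpace ℝ (Fin d)),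
      MeasurableSet V ∧ IsCompact (closure V) ∧ ν V > τ * volume (C + V) := by
  obtain ⟨τ', hττ', hτ'⟩ := exists_between hτ
  -- volume of K
  have hK0 : volume K ≠ 0 := by
    refine fun h => (isOpen_interior.measure_pos volume hKint).ne' (measure_mono_null interior_subset h)
  have hKtop : volume K ≠ ⊤ := hKcomp.measure_lt_top.ne
  -- interior ball
  obtain ⟨z, hz⟩ := hKint
  obtain ⟨ε, hε, hball⟩ := Metric.isOpen_iff.mp isOpen_interior z hz
  -- bound C
  obtain ⟨R, hR, hCR⟩ := hC.isBounded.subset_ball_lt 0 0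
  set s : ℝ := R / ε with hs_def
  have hs : 0 < s := div_pos hR hε
  -- choose multiplicative slack b = ofReal θ, 1 < θ, τ * b ≤ τ'
  obtain ⟨θ, hθ1, hτθ⟩ : ∃ θ : ℝ, 1 < θ ∧ τ * ENNReal.ofReal θ ≤ τ' := by
    rcases eq_or_ne τ 0 with rfl | hτ0
    · exact ⟨2, one_lt_two, by simp⟩
    · have hτtop : τ ≠ ⊤ := hττ'.ne_top
      have h1 : (1 : ℝ≥0∞) < τ' / τ :=
        (ENNReal.lt_div_iff_mul_lt (Or.inl hτ0) (Or.inl hτtop)).mpr (by simpa using hττ')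
      obtain ⟨b, hb1, hb2⟩ := exists_between h1
      have hbtop : b ≠ ⊤ := hb2.ne_top
      refine ⟨b.toReal, ?_, ?_⟩
      · have := ENNReal.toReal_lt_toReal (by simp) hbtop |>.mpr hb1
        simpa using this
      · rw [ENNReal.ofReal_toReal hbtop, mul_comm]
        exact (ENNReal.le_div_iff_mul_le (Or.inl hτ0) (Or.inl hτtop)).mp hb2.le
  have hθ0 : (0:ℝ) ≤ θ := le_of_lt (lt_trans one_pos hθ1)
  -- eventually (r+s)^d ≤ θ * r^d
  have hlim : Tendsto (fun r : ℝ => ((r + s) / r) ^ d) atTop (nhds 1) := by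
    have h0 : Tendsto (fun r : ℝ => s / r) atTop (nhds 0) :=
      Filter.Tendsto.div_atTop tendsto_const_nhds tendsto_id
    have h2 : Tendsto (fun r : ℝ => 1 + s / r) atTop (nhds (1 + 0)) :=
      tendsto_const_nhds.add h0
    rw [add_zero] at h2
    have h3 : Tendsto (fun r : ℝ => (r + s) / r) atTop (nhds 1) := by
      refine h2.congr' ?_
      filter_upwards [eventually_gt_atTop (0:ℝ)] with r hr
      field_simp
    simpa using h3.pow d
  have hev : ∀ᶠ r : ℝ in atTop, (r + s) ^ d ≤ θ * r ^ d := by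
    filter_upwards [hlim.eventually (eventually_le_nhds hθ1), eventually_gt_atTop (0:ℝ)]
      with r h1 h2
    have hr0 : r ^ d ≠ 0 := pow_ne_zero _ h2.ne'
    calc (r + s) ^ d = ((r + s) / r) ^ d * r ^ d := by
          rw [div_pow, div_mul_cancel₀ _ hr0]
      _ ≤ θ * r ^ d := mul_le_mul_of_nonneg_right h1 (pow_nonneg h2.le d)
  -- frequently τ' < sup
  have hfreq := Filter.frequently_lt_of_lt_limsup (by isBoundedDefault) hτ'
  obtain ⟨r, ⟨hsup, hrθ, hr1⟩⟩ :=
    (hfreq.and_eventually (hev.and (eventually_ge_atTop (1:ℝ)))).exists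
  have hr0 : (0:ℝ) < r := lt_of_lt_of_le one_pos hr1
  obtain ⟨x, hx⟩ := lt_iSup_iff.mp hsup
  -- volume of r • K
  have hvolr : volume (r • K) = ENNReal.ofReal (r ^ d) * volume K := by
    rw [Measure.addHaar_smul, finrank_euclideanSpace_fin, abs_of_nonneg (pow_nonneg hr0.le d)]
  have hvolr0 : volume (r • K) ≠ 0 := by
    rw [hvolr]
    exact mul_ne_zero (by simp [pow_pos hr0]) hK0
  have hvolrtop : volume (r • K) ≠ ⊤ := by
    rw [hvolr]
    exact ENNReal.mul_ne_top ENNReal.ofReal_ne_top hKtop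
  -- the set V
  refine ⟨{x} + r • K, ?_, ?_, ?_⟩
  · exact (((isCompact_singleton).add (hKcomp.smul r)).isClosed).measurableSet
  · rw [IsClosed.closure_eq (((isCompact_singleton).add (hKcomp.smul r)).isClosed)]
    exact (isCompact_singleton).add (hKcomp.smul r)
  -- containment
  have hsub : C + r • K ⊆ {-(s • z)} + (r + s) • K := by
    rintro w hw
    rw [Set.mem_add] at hw
    obtain ⟨c, hc, y, hy, rfl⟩ := hw
    obtain ⟨k, hk, rfl⟩ := hy
    have hrs : 0 < r + s := add_pos hr0 hs
    have hcs : z + s⁻¹ • c ∈ K := by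
      apply interior_subset
      apply hball
      rw [Metric.mem_ball, dist_eq_norm]
      have : z + s⁻¹ • c - z = s⁻¹ • c := by abel
      rw [this, norm_smul, norm_inv, Real.norm_of_nonneg hs.le]
      have hcR : ‖c‖ < R := by simpa [Metric.mem_ball, dist_eq_norm] using hCR hc
      calc s⁻¹ * ‖c‖ < s⁻¹ * R := by
            exact mul_lt_mul_of_pos_left hcR (inv_pos.mpr hs)
        _ = ε := by rw [hs_def]; field_simp
    set k' : EuclideanSpace ℝ (Fin d) :=
      (r / (r + s)) • k + (s / (r + s)) • (z + s⁻¹ • c) with hk'_def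
    have hk'K : k' ∈ K := by
      apply hKconv hk hcs (div_nonneg hr0.le hrs.le) (div_nonneg hs.le hrs.le)
      rw [← add_div, div_self hrs.ne']
    rw [Set.mem_add]
    refine ⟨-(s • z), mem_singleton _, (r + s) • k', ⟨k', hk'K, rfl⟩, ?_⟩
    rw [hk'_def, smul_add, smul_smul, smul_smul, smul_add, smul_smul,
      mul_div_cancel₀ _ hrs.ne', mul_div_cancel₀ _ hrs.ne',
      mul_inv_cancel₀ hs.ne', one_smul]
    abel
  -- volume bound
  have hCV : volume (C + ({x} + r • K)) ≤ ENNReal.ofReal θ * volume (r • K) := by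
    have e1 : C + ({x} + r • K) = {x} + (C + r • K) := by
      rw [add_left_comm]
    have e2 : volume ({x} + (C + r • K)) = volume (C + r • K) := by
      rw [Set.singleton_add]; exact measure_vadd volume x (C + r • K)
    rw [e1, e2]
    calc volume (C + r • K) ≤ volume ({-(s • z)} + (r + s) • K) := measure_mono hsub
      _ = volume ((r + s) • K) := by
          rw [Set.singleton_add]; exact measure_vadd volume (-(s • z)) ((r + s) • K)
      _ = ENNReal.ofReal ((r + s) ^ d) * volume K := by
          rw [Measure.addHaar_smul, finrank_euclideanSpace_fin,
            abs_of_nonneg (pow_nonneg (add_pos hr0 hs).le d)]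
      _ ≤ ENNReal.ofReal (θ * r ^ d) * volume K :=
          mul_le_mul_left (ENNReal.ofReal_le_ofReal hrθ) _
      _ = ENNReal.ofReal θ * volume (r • K) := by
          rw [ENNReal.ofReal_mul hθ0, hvolr, mul_assoc]
  -- final chain
  have hν : τ' * volume (r • K) < ν ({x} + r • K) :=
    (ENNReal.lt_div_iff_mul_lt (Or.inl hvolr0) (Or.inl hvolrtop)).mp hx
  calc τ * volume (C + ({x} + r • K)) ≤ τ * (ENNReal.ofReal θ * volume (r • K)) := by
        gcongr
    _ = (τ * ENNReal.ofReal θ) * volume (r • K) := by rw [mul_assoc]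
    _ ≤ τ' * volume (r • K) := by gcongr
    _ < ν ({x} + r • K) := hν

theorem uaud_ge_densK {d : ℕ} (K : Set (EuclideanSpace ℝ (Fin d)))
    (hKcomp : IsCompact K) (hKconv : Convex ℝ K) (hKint : (interior K).Nonempty)
    (ν : Measure (EuclideanSpace ℝ (Fin d))) :
    uaud ν volume ≥ densK K ν ∧
      ∀ τ : ℝ≥0∞, τ < densK K ν →
        ∀ C : Set (EuclideanSpace ℝ (Fin d)), IsCompact C → C.Nonempty →
          ∃ V : Set (EuclideanSpace ℝ (Fin d)),
            MeasurableSet V ∧ IsCompact (closure V) ∧ ν V > τ * volume (C + V) := by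
  have key : ∀ τ : ℝ≥0∞, τ < densK K ν →
      ∀ C : Set (EuclideanSpace ℝ (Fin d)), IsCompact C → C.Nonempty →
        ∃ V : Set (EuclideanSpace ℝ (Fin d)),
          MeasurableSet V ∧ IsCompact (closure V) ∧ ν V > τ * volume (C + V) := by
    intro τ hτ C hC hCne
    exact densK_key K hKcomp hKconv hKint ν τ hτ C hC hCne
  refine ⟨?_, key⟩
  rw [ge_iff_le, uaud]
  refine le_iInf₂ fun C hC => ?_
  refine le_of_forall_lt fun c hc => ?_
  obtain ⟨c', hcc', hc'⟩ := exists_between hc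
  obtain ⟨V, hVmeas, hVcl, hV⟩ := key c' hc' C hC.1 hC.2
  have hCVtop : volume (C + V) ≠ ⊤ := by
    refine (lt_of_le_of_lt (measure_mono ?_) (hC.1.add hVcl).measure_lt_top).ne
    exact add_subset_add_left subset_closure
  have h0 : volume (C + V) ≠ 0 ∨ ν V ≠ 0 := by
    rcases eq_or_ne (volume (C + V)) 0 with h | h
    · right
      intro hν
      rw [hν, h, mul_zero] at hV
      exact (lt_irrefl _ hV).elim
    · exact Or.inl h
  have hle : c' ≤ ν V / volume (C + V) :=
    (ENNReal.le_div_iff_mul_le h0 (Or.inl hCVtop)).mpr hV.le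
  refine lt_of_lt_of_le hcc' (le_trans hle ?_)
  exact le_iSup₂_of_le V ⟨hVmeas, hVcl⟩ le_rfl
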